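/- Let Φ = (G, Π) be an affine Unique-Games instance over the symmetric group S_m on a graph G whose normalized adjacency matrix has second eigenvalue at most λ < 1. For any two assignments X, X' : V(G) → S_m, there exists a permutation π ∈ S_m such that Pr_{v ∈ V(G)}[X(v) ≠ X'(v)·π] ≤ (viol(X) + viol(X'))/(1 − λ). -/

import Mathlib

lemma spectral_bound {V : Type} [Fintype V]
    (w : V → V → ℝ) (hsym : ∀ u v, w u v = w v u)
    (hsum : ∑ u, ∑ v, w u v = 1)
    (lam : ℝ)
    (hlam : ∀ f : V → ℝ, (∑ v, (∑ u, w v u) * f v) = 0 →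
      (∑ u, ∑ v, w u v * f u * f v) ≤ lam * ∑ v, (∑ u, w v u) * (f v) ^ 2)
    (f : V → ℝ) (hf : ∀ v, f v ^ 2 = f v) :
    2 * (1 - lam) *
      ((∑ v, (∑ u, w v u) * f v) - (∑ v, (∑ u, w v u) * f v) ^ 2)
      ≤ ∑ u, ∑ v, w u v * (f u - f v) ^ 2 := by
  classical
  have hcolrow : ∀ v : V, (∑ u, w u v) = ∑ u, w v u := fun v =>
    Finset.sum_congr rfl fun u _ => hsym u v
  set p : ℝ := ∑ v, (∑ u, w v u) * f v with hp
  have hμ1 : (∑ v, ∑ u, w v u) = 1 := hsum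
  -- row sums
  have hrow : (∑ u, ∑ v, w u v * f u) = p := by
    simp_rw [← Finset.sum_mul]
    rfl
  have hcol : (∑ u, ∑ v, w u v * f v) = p := by
    rw [Finset.sum_comm]
    simp_rw [← Finset.sum_mul, hcolrow]
    rfl
  have hS1 : (∑ u, ∑ v, w u v * f u ^ 2) = p := by
    simp_rw [hf]; exact hrow
  have hS2 : (∑ u, ∑ v, w u v * f v ^ 2) = p := by
    simp_rw [hf]; exact hcol
  have hg0 : (∑ v, (∑ u, w v u) * (f v - p)) = 0 := by
    have e : ∀ v : V, (∑ u, w v u) * (f v - p)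
        = (∑ u, w v u) * f v - (∑ u, w v u) * p := by
      intro v; ring
    simp_rw [e, Finset.sum_sub_distrib, ← Finset.sum_mul, hμ1]
    ring
  have hQ : (∑ u, ∑ v, w u v * (f u - p) * (f v - p))
      ≤ lam * ∑ v, (∑ u, w v u) * (f v - p) ^ 2 := hlam (fun v => f v - p) hg0
  have hQL : (∑ u, ∑ v, w u v * (f u - p) * (f v - p))
      = (∑ u, ∑ v, w u v * f u * f v) - p ^ 2 := by
    have e : ∀ u v : V, w u v * (f u - p) * (f v - p)
        = w u v * f u * f v - p * (w u v * f u) - p * (w u v * f v)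
            + p ^ 2 * w u v := by
      intro u v; ring
    simp_rw [e]
    simp_rw [Finset.sum_add_distrib]
    simp_rw [Finset.sum_sub_distrib]
    simp_rw [← Finset.mul_sum]
    rw [hrow, hcol, hsum]
    ring
  have hQR : (∑ v, (∑ u, w v u) * (f v - p) ^ 2) = p - p ^ 2 := by
    have e : ∀ v : V, (∑ u, w v u) * (f v - p) ^ 2
        = (∑ u, w v u) * f v ^ 2 - 2 * p * ((∑ u, w v u) * f v)
            + p ^ 2 * (∑ u, w v u) := by
      intro v; ring
    simp_rw [e]
    simp_rw [hf]
    simp_rw [Finset.sum_add_distrib]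
    simp_rw [Finset.sum_sub_distrib]
    simp_rw [← Finset.mul_sum]
    rw [hμ1, ← hp]
    ring
  rw [hQL, hQR] at hQ
  have hquad : (∑ u, ∑ v, w u v * (f u - f v) ^ 2)
      = 2 * p - 2 * (∑ u, ∑ v, w u v * f u * f v) := by
    have e : ∀ u v : V, w u v * (f u - f v) ^ 2
        = w u v * f u ^ 2 + w u v * f v ^ 2 - 2 * (w u v * f u * f v) := by
      intro u v; ring
    simp_rw [e, Finset.sum_sub_distrib, Finset.sum_add_distrib, ← Finset.mul_sum]
    rw [hS1, hS2]; ring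
  rw [hquad]
  nlinarith [hQ]


/-- Let `Φ = (G, Π)` be an affine Unique-Games instance over `S_m`
on a weighted graph `G` (symmetric edge distribution `w` of total mass `1`,
stationary measure `μ v = ∑_u w v u`) whose normalized adjacency matrix has second
eigenvalue at most `λ < 1` (expressed via the quadratic form on mean-zero
functions).  For any two assignments `X, X' : V → S_m` there is `π₀ ∈ S_m` with
`Pr_{v∼μ}[X v ≠ X' v · π₀] ≤ (viol X + viol X')/(1 − λ)`. -/
theorem stmt3 (m : ℕ) (V : Type) [Fintype V]
    (w : V → V → ℝ) (hw : ∀ u v, 0 ≤ w u v) (hsym : ∀ u v, w u v = w v u)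
    (hsum : ∑ u, ∑ v, w u v = 1)
    (cst : V → V → Equiv.Perm (Fin m)) (hcst : ∀ u v, cst u v = (cst v u)⁻¹)
    (lam : ℝ) (hlam1 : lam < 1)
    (hlam : ∀ f : V → ℝ, (∑ v, (∑ u, w v u) * f v) = 0 →
      (∑ u, ∑ v, w u v * f u * f v) ≤ lam * ∑ v, (∑ u, w v u) * (f v) ^ 2)
    (X X' : V → Equiv.Perm (Fin m)) :
    ∃ π₀ : Equiv.Perm (Fin m),
      (∑ v, (∑ u, w v u) * (if X v ≠ X' v * π₀ then (1 : ℝ) else 0)) ≤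
        ((∑ u, ∑ v, w u v * (if X u ≠ cst u v * X v then (1 : ℝ) else 0)) +
          (∑ u, ∑ v, w u v * (if X' u ≠ cst u v * X' v then (1 : ℝ) else 0)))
          / (1 - lam) := by
  classical
  set Y : V → Equiv.Perm (Fin m) := fun v => (X' v)⁻¹ * X v with hY
  set p : Equiv.Perm (Fin m) → ℝ :=
    fun π => ∑ v, (∑ u, w v u) * (if Y v = π then (1 : ℝ) else 0) with hp
  have hμ1 : (∑ v : V, ∑ u : V, w v u) = 1 := hsum
  have hμnn : ∀ v : V, 0 ≤ ∑ u, w v u := fun v =>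
    Finset.sum_nonneg fun u _ => hw v u
  have hpnn : ∀ π, 0 ≤ p π := by
    intro π
    apply Finset.sum_nonneg
    intro v _
    have : (0:ℝ) ≤ if Y v = π then (1:ℝ) else 0 := by positivity
    exact mul_nonneg (hμnn v) this
  have hpsum : (∑ π : Equiv.Perm (Fin m), p π) = 1 := by
    rw [hp]
    rw [Finset.sum_comm]
    have e : ∀ v : V, (∑ π : Equiv.Perm (Fin m),
        (∑ u, w v u) * (if Y v = π then (1:ℝ) else 0)) = ∑ u, w v u := by
      intro v
      rw [← Finset.mul_sum]
      simp [Finset.sum_ite_eq]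
    simp_rw [e]
    exact hμ1
  -- choose π₀ maximizing p
  obtain ⟨π₀, -, hmax⟩ := Finset.exists_max_image (Finset.univ) p ⟨1, Finset.mem_univ 1⟩
  refine ⟨π₀, ?_⟩
  -- per-π spectral bound
  have key : ∀ π : Equiv.Perm (Fin m),
      2 * (1 - lam) * (p π - p π ^ 2) ≤
        ∑ u, ∑ v, w u v *
          ((if Y u = π then (1:ℝ) else 0) - (if Y v = π then (1:ℝ) else 0)) ^ 2 := by
    intro π
    have := spectral_bound w hsym hsum lam hlam
      (fun v => if Y v = π then (1:ℝ) else 0)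
      (fun v => by by_cases h : Y v = π <;> simp [h])
    exact this
  -- sum over π of per-edge squared differences
  have hπsum : ∀ u v : V,
      (∑ π : Equiv.Perm (Fin m),
        ((if Y u = π then (1:ℝ) else 0) - (if Y v = π then (1:ℝ) else 0)) ^ 2)
      = if Y u = Y v then 0 else 2 := by
    intro u v
    by_cases h : Y u = Y v
    · simp [h]
    · rw [if_neg h]
      have e : ∀ π : Equiv.Perm (Fin m),
          ((if Y u = π then (1:ℝ) else 0) - (if Y v = π then (1:ℝ) else 0)) ^ 2
          = (if Y u = π then (1:ℝ) else 0) + (if Y v = π then (1:ℝ) else 0) := by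
        intro π
        by_cases h1 : Y u = π <;> by_cases h2 : Y v = π
        · exact absurd (h1.trans h2.symm) h
        · simp [h1, h2]
        · simp [h1, h2]
        · simp [h1, h2]
      simp_rw [e, Finset.sum_add_distrib]
      simp only [Finset.sum_ite_eq, Finset.mem_univ, if_true]
      norm_num
  -- each violated-pair indicator bound
  have hedge : ∀ u v : V, (if Y u = Y v then (0:ℝ) else 2) ≤
      2 * ((if X u ≠ cst u v * X v then (1:ℝ) else 0) +
        (if X' u ≠ cst u v * X' v then (1:ℝ) else 0)) := by
    intro u v
    by_cases h : Y u = Y v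
    · rw [if_pos h]
      have : (0:ℝ) ≤ (if X u ≠ cst u v * X v then (1:ℝ) else 0) +
          (if X' u ≠ cst u v * X' v then (1:ℝ) else 0) := by positivity
      linarith
    · rw [if_neg h]
      by_cases h1 : X u = cst u v * X v
      · by_cases h2 : X' u = cst u v * X' v
        · exfalso
          apply h
          simp only [hY, h1, h2, mul_inv_rev]
          group
        · simp [h1, h2]
      · by_cases h2 : X' u = cst u v * X' v <;> simp [h1, h2] <;> norm_num
  -- the global inequality
  set vX : ℝ := ∑ u, ∑ v, w u v * (if X u ≠ cst u v * X v then (1:ℝ) else 0) with hvX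
  set vX' : ℝ := ∑ u, ∑ v, w u v * (if X' u ≠ cst u v * X' v then (1:ℝ) else 0) with hvX'
  have big : 2 * (1 - lam) * (1 - ∑ π : Equiv.Perm (Fin m), p π ^ 2) ≤
      2 * (vX + vX') := by
    have step1 : 2 * (1 - lam) * (1 - ∑ π : Equiv.Perm (Fin m), p π ^ 2)
        = ∑ π : Equiv.Perm (Fin m), 2 * (1 - lam) * (p π - p π ^ 2) := by
      rw [← Finset.mul_sum, Finset.sum_sub_distrib, hpsum]
    rw [step1]
    have step2 : (∑ π : Equiv.Perm (Fin m), ∑ u, ∑ v, w u v *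
          ((if Y u = π then (1:ℝ) else 0) - (if Y v = π then (1:ℝ) else 0)) ^ 2)
        = ∑ u, ∑ v, w u v * (if Y u = Y v then (0:ℝ) else 2) := by
      rw [Finset.sum_comm]
      refine Finset.sum_congr rfl fun u _ => ?_
      rw [Finset.sum_comm]
      refine Finset.sum_congr rfl fun v _ => ?_
      rw [← Finset.mul_sum, hπsum]
    calc (∑ π : Equiv.Perm (Fin m), 2 * (1 - lam) * (p π - p π ^ 2))
        ≤ ∑ π : Equiv.Perm (Fin m), ∑ u, ∑ v, w u v *
            ((if Y u = π then (1:ℝ) else 0) - (if Y v = π then (1:ℝ) else 0)) ^ 2 :=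
          Finset.sum_le_sum fun π _ => key π
      _ = ∑ u, ∑ v, w u v * (if Y u = Y v then (0:ℝ) else 2) := step2
      _ ≤ ∑ u, ∑ v, w u v * (2 * ((if X u ≠ cst u v * X v then (1:ℝ) else 0) +
            (if X' u ≠ cst u v * X' v then (1:ℝ) else 0))) := by
          refine Finset.sum_le_sum fun u _ => Finset.sum_le_sum fun v _ => ?_
          exact mul_le_mul_of_nonneg_left (hedge u v) (hw u v)
      _ = 2 * (vX + vX') := by
          rw [hvX, hvX', mul_add]
          simp_rw [Finset.mul_sum]
          rw [← Finset.sum_add_distrib]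
          refine Finset.sum_congr rfl fun u _ => ?_
          rw [← Finset.sum_add_distrib]
          refine Finset.sum_congr rfl fun v _ => ?_
          ring
  -- the target sum equals 1 - p π₀
  have htarget : (∑ v, (∑ u, w v u) * (if X v ≠ X' v * π₀ then (1:ℝ) else 0))
      = 1 - p π₀ := by
    have e : ∀ v : V, (∑ u, w v u) * (if X v ≠ X' v * π₀ then (1:ℝ) else 0)
        = (∑ u, w v u) - (∑ u, w v u) * (if Y v = π₀ then (1:ℝ) else 0) := by
      intro v
      have hiff : X v = X' v * π₀ ↔ Y v = π₀ := by
        have hYv : Y v = (X' v)⁻¹ * X v := rfl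
        rw [hYv, inv_mul_eq_iff_eq_mul]
      by_cases h : X v = X' v * π₀
      · rw [if_neg (by simpa using h), if_pos (hiff.mp h)]; ring
      · rw [if_pos (by simpa using h), if_neg (fun hc => h (hiff.mpr hc))]; ring
    simp_rw [e]
    rw [Finset.sum_sub_distrib, hμ1]
  rw [htarget]
  -- finish
  have hsq : (∑ π : Equiv.Perm (Fin m), p π ^ 2) ≤ p π₀ := by
    calc (∑ π : Equiv.Perm (Fin m), p π ^ 2)
        ≤ ∑ π : Equiv.Perm (Fin m), p π * p π₀ := by
          refine Finset.sum_le_sum fun π _ => ?_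
          have := hmax π (Finset.mem_univ π)
          nlinarith [hpnn π]
      _ = p π₀ := by rw [← Finset.sum_mul, hpsum, one_mul]
  have h1l : (0:ℝ) < 1 - lam := by linarith
  rw [le_div_iff₀ h1l]
  nlinarith [big, hsq, h1l]
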